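/- arXiv:2008.05069 — 2 statements merged into one kernel-verified Lean document; each statement's English description precedes it below -/
import Mathlib

section
/- For every positive integer n, the graph K^1_{n, C(n,2)} (the complete bipartite graph with parts of sizes n and n(n−1)/2 in which every edge is subdivided exactly once) contains every graph on n vertices as a vertex-minor. -/
open SimpleGraph

/-! ### Basic operations: local complementation, pivoting, vertex-minors -/

/-- Local complementation at a vertex `v`: the adjacency between each pair of
neighbours of `v` is toggled. -/
def localComp {V : Type*} (G : SimpleGraph V) (v : V) : SimpleGraph V where
  Adj a b := (G.Adj a b ∧ ¬(G.Adj v a ∧ G.Adj v b)) ∨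
    (a ≠ b ∧ ¬ G.Adj a b ∧ G.Adj v a ∧ G.Adj v b)
  symm := by
    constructor
    rintro a b (⟨h1, h2⟩ | ⟨h1, h2, h3, h4⟩)
    · exact Or.inl ⟨h1.symm, fun hc => h2 ⟨hc.2, hc.1⟩⟩
    · exact Or.inr ⟨h1.symm, fun hc => h2 hc.symm, h4, h3⟩
  loopless := by
    constructor
    rintro a (⟨h1, _⟩ | ⟨h1, _⟩)
    · exact G.irrefl h1
    · exact h1 rfl

/-- Pivoting an edge `uv`: `G ∧ uv = G * u * v * u`. -/
def pivotG {V : Type*} (G : SimpleGraph V) (u v : V) : SimpleGraph V :=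
  localComp (localComp (localComp G u) v) u

/-- Finite simple graphs, concretely represented on `Fin n`. -/
abbrev FinGraph := Σ n : ℕ, SimpleGraph (Fin n)

/-- One step in the construction of a vertex-minor: pass to an isomorphic copy,
perform a local complementation, or delete a vertex. -/
def VMStep (G H : FinGraph) : Prop :=
  Nonempty (G.2 ≃g H.2) ∨
  (∃ v : Fin G.1, Nonempty ((localComp G.2 v) ≃g H.2)) ∨
  (∃ v : Fin G.1, Nonempty ((G.2.induce {u | u ≠ v}) ≃g H.2))

/-- One step in the construction of a pivot-minor: pass to an isomorphic copy,
pivot an edge, or delete a vertex. -/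
def PMStep (G H : FinGraph) : Prop :=
  Nonempty (G.2 ≃g H.2) ∨
  (∃ u v : Fin G.1, G.2.Adj u v ∧ Nonempty ((pivotG G.2 u v) ≃g H.2)) ∨
  (∃ v : Fin G.1, Nonempty ((G.2.induce {u | u ≠ v}) ≃g H.2))

/-- `H` is a vertex-minor of `G` (both given concretely on `Fin _`). -/
def IsVertexMinorFG (H G : FinGraph) : Prop := Relation.ReflTransGen VMStep G H

/-- `H` is a pivot-minor of `G` (both given concretely on `Fin _`). -/
def IsPivotMinorFG (H G : FinGraph) : Prop := Relation.ReflTransGen PMStep G H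

/-- A finite graph represented concretely on `Fin (Nat.card V)`. -/
noncomputable def toFinGraph {V : Type*} [Finite V] (G : SimpleGraph V) : FinGraph :=
  ⟨Nat.card V, G.comap (Finite.equivFin V).symm⟩

/-- `H` is a vertex-minor of `G`. -/
def HasVertexMinor {V W : Type*} [Finite V] [Finite W]
    (G : SimpleGraph V) (H : SimpleGraph W) : Prop :=
  IsVertexMinorFG (toFinGraph H) (toFinGraph G)

/-- `H` is a pivot-minor of `G`. -/
def HasPivotMinor {V W : Type*} [Finite V] [Finite W]
    (G : SimpleGraph V) (H : SimpleGraph W) : Prop :=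
  IsPivotMinorFG (toFinGraph H) (toFinGraph G)

/-- A class of finite graphs closed under isomorphism, local complementation and
vertex deletion. -/
def VertexMinorClosed (𝒢 : Set FinGraph) : Prop :=
  (∀ G ∈ 𝒢, ∀ H : FinGraph, Nonempty (G.2 ≃g H.2) → H ∈ 𝒢) ∧
  (∀ G ∈ 𝒢, ∀ v : Fin G.1, (⟨G.1, localComp G.2 v⟩ : FinGraph) ∈ 𝒢) ∧
  (∀ G ∈ 𝒢, ∀ v : Fin G.1, toFinGraph (G.2.induce {u | u ≠ v}) ∈ 𝒢)

/-- A class of finite graphs closed under isomorphism, pivoting and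
vertex deletion. -/
def PivotMinorClosed (𝒢 : Set FinGraph) : Prop :=
  (∀ G ∈ 𝒢, ∀ H : FinGraph, Nonempty (G.2 ≃g H.2) → H ∈ 𝒢) ∧
  (∀ G ∈ 𝒢, ∀ u v : Fin G.1, G.2.Adj u v → (⟨G.1, pivotG G.2 u v⟩ : FinGraph) ∈ 𝒢) ∧
  (∀ G ∈ 𝒢, ∀ v : Fin G.1, toFinGraph (G.2.induce {u | u ≠ v}) ∈ 𝒢)

/-! ### Chromatic data -/

/-- The chromatic number, as a natural number (graphs here are finite). -/
noncomputable def chi {V : Type*} (G : SimpleGraph V) : ℕ := G.chromaticNumber.toNat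

/-- The ball of radius `ρ` around `v`: all vertices at distance at most `ρ` from `v`. -/
def ballSet {V : Type*} (G : SimpleGraph V) (v : V) (ρ : ℕ) : Set V :=
  {u | ∃ p : G.Walk v u, p.length ≤ ρ}

/-- `χ^{(ρ)}(G)`: the largest chromatic number of a `ρ`-ball of `G`. -/
noncomputable def chiBall {V : Type*} (G : SimpleGraph V) (ρ : ℕ) : ℕ :=
  ⨆ v : V, chi (G.induce (ballSet G v ρ))

/-- The distance from `u` to `v` is at least `n` (in particular, this holds
vacuously for unreachable pairs). -/
def distGE {V : Type*} (G : SimpleGraph V) (u v : V) (n : ℕ) : Prop :=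
  ∀ p : G.Walk u v, n ≤ p.length

/-- A stable (independent) set of vertices. -/
def IsStableSet {V : Type*} (G : SimpleGraph V) (A : Set V) : Prop :=
  ∀ a ∈ A, ∀ b ∈ A, ¬ G.Adj a b

/-- `A` covers `B`: every vertex of `B` has a neighbour in `A`. -/
def Covers {V : Type*} (G : SimpleGraph V) (A B : Set V) : Prop :=
  ∀ b ∈ B, ∃ a ∈ A, G.Adj a b

/-- `A` and `B` are anti-complete: there are no edges between them. -/
def AntiComplete {V : Type*} (G : SimpleGraph V) (A B : Set V) : Prop :=
  ∀ a ∈ A, ∀ b ∈ B, ¬ G.Adj a b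

/-- An induced path of `G`, given as a walk: it is a path, and the only edges of `G`
between its vertices are the edges of the path. -/
def IsInducedPath {V : Type*} (G : SimpleGraph V) {a b : V} (p : G.Walk a b) : Prop :=
  p.IsPath ∧ ∀ x ∈ p.support, ∀ y ∈ p.support, G.Adj x y → p.toSubgraph.Adj x y
/-! ### Big cliques and bloated trees -/

/-- A big clique: a maximal clique (w.r.t. vertex inclusion) of size at least 3. -/
def IsBigClique {V : Type*} (G : SimpleGraph V) (s : Finset V) : Prop :=
  G.IsClique ↑s ∧ 3 ≤ s.card ∧ ∀ t : Finset V, G.IsClique ↑t → s ⊆ t → t = s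

/-- Two vertices are related when they lie in a common big clique. -/
def bigCliqueRel {V : Type*} (G : SimpleGraph V) (u v : V) : Prop :=
  u = v ∨ ∃ s : Finset V, IsBigClique G s ∧ u ∈ s ∧ v ∈ s

/-- The graph obtained by contracting every big clique to a single vertex. -/
def contractBigCliques {V : Type*} (G : SimpleGraph V) :
    SimpleGraph (Quot (bigCliqueRel G)) where
  Adj a b := a ≠ b ∧ ∃ u v, G.Adj u v ∧ Quot.mk _ u = a ∧ Quot.mk _ v = b
  symm := by
    constructor
    rintro a b ⟨hne, u, v, h, hu, hv⟩
    exact ⟨hne.symm, v, u, h.symm, hv, hu⟩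
  loopless := ⟨fun a h => h.1 rfl⟩

/-- A bloated tree: every edge is in at most one big clique, vertices of a big
`k`-clique have degree at most `k`, and contracting all big cliques yields a tree. -/
def IsBloatedTree {V : Type*} (T : SimpleGraph V) : Prop :=
  (∀ u v, T.Adj u v → ∀ s t : Finset V, IsBigClique T s → IsBigClique T t →
    u ∈ s → v ∈ s → u ∈ t → v ∈ t → s = t) ∧
  (∀ s : Finset V, IsBigClique T s → ∀ v ∈ s, (T.neighborSet v).ncard ≤ s.card) ∧
  (contractBigCliques T).IsTree

/-- A leaf: a vertex of degree at most 1. -/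
def IsLeaf {V : Type*} (G : SimpleGraph V) (v : V) : Prop :=
  (G.neighborSet v).ncard ≤ 1

/-- A branching vertex of a bloated tree: a vertex of degree at least 3 that is
not contained in a triangle. -/
def IsBranching {V : Type*} (G : SimpleGraph V) (v : V) : Prop :=
  3 ≤ (G.neighborSet v).ncard ∧ ¬ ∃ a b, G.Adj v a ∧ G.Adj v b ∧ G.Adj a b

/-! ### Dangling paths and contractions -/

/-- The path `p` dangles from `X`: the set of vertices outside `p` with a
neighbour on `p` is exactly `X`. -/
def DanglesFrom {V : Type*} (G : SimpleGraph V) {a b : V} (p : G.Walk a b)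
    (X : Set V) : Prop :=
  {v | v ∉ p.support ∧ ∃ u ∈ p.support, G.Adj v u} = X

/-- The path `p` dangles oddly from `X`: moreover every vertex of `X` has an odd
number of neighbours on `p`. -/
def DanglesOddly {V : Type*} (G : SimpleGraph V) {a b : V} (p : G.Walk a b)
    (X : Set V) : Prop :=
  DanglesFrom G p X ∧ ∀ x ∈ X, Odd ({u | u ∈ p.support ∧ G.Adj x u}.ncard)

/-- Contract the set `S` to the single vertex `a₀` (for `a₀ ∈ S` with `G[S]`
connected this is contraction of all edges inside `S`). -/
def contractSet {V : Type*} (G : SimpleGraph V) (S : Set V) (a₀ : V) :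
    SimpleGraph {w : V // w ∉ S ∨ w = a₀} where
  Adj u v := u ≠ v ∧
    ((u.1 ∉ S ∧ v.1 ∉ S ∧ G.Adj u.1 v.1) ∨
     (u.1 = a₀ ∧ v.1 ∉ S ∧ ∃ s ∈ S, G.Adj s v.1) ∨
     (v.1 = a₀ ∧ u.1 ∉ S ∧ ∃ s ∈ S, G.Adj u.1 s))
  symm := by
    constructor
    rintro u v ⟨hne, h⟩
    refine ⟨hne.symm, ?_⟩
    rcases h with ⟨h1, h2, h3⟩ | ⟨h1, h2, s, hs, hadj⟩ | ⟨h1, h2, s, hs, hadj⟩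
    · exact Or.inl ⟨h2, h1, h3.symm⟩
    · exact Or.inr (Or.inr ⟨h1, h2, s, hs, hadj.symm⟩)
    · exact Or.inr (Or.inl ⟨h1, h2, s, hs, hadj.symm⟩)
  loopless := ⟨fun u h => h.1 rfl⟩

/-! ### Ramsey numbers -/

/-- Every graph on `Fin N` contains a clique of size `n` or a stable set of size `m`. -/
def RamseyProp (N n m : ℕ) : Prop :=
  ∀ G : SimpleGraph (Fin N),
    (∃ s : Finset (Fin N), G.IsNClique n s) ∨ (∃ s : Finset (Fin N), Gᶜ.IsNClique m s)

/-- The Ramsey number `R(n,m)`: the least `N` such that every graph on at least `N`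
vertices contains a clique of size `n` or a stable set of size `m`. -/
noncomputable def ramsey (n m : ℕ) : ℕ := sInf {N | ∀ M, N ≤ M → RamseyProp M n m}

/-! ### Subdivided complete bipartite graphs and interfered versions -/

/-- The vertex set of (an interfered) `K¹_{n,m}`: the `x_i`, the `y_j`, and the
subdivision vertices `z_{i,j}`. -/
abbrev IVert (n m : ℕ) := Fin n ⊕ Fin m ⊕ Fin n × Fin m

/-- `K¹_{n,m}`: the complete bipartite graph `K_{n,m}` with every edge subdivided
exactly once. -/
def KOneBip (n m : ℕ) : SimpleGraph (IVert n m) :=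
  SimpleGraph.fromRel (fun a b => ∃ i j,
    (a = Sum.inl i ∧ b = Sum.inr (Sum.inr (i, j))) ∨
    (a = Sum.inr (Sum.inl j) ∧ b = Sum.inr (Sum.inr (i, j))))

/-- The pairs that may be adjacent in an interfered `K¹_{n,m}`. -/
def InterferedAllowed (n m : ℕ) (a b : IVert n m) : Prop :=
  (∃ i j, a = Sum.inl i ∧ b = Sum.inr (Sum.inr (i, j))) ∨
  (∃ i j, a = Sum.inr (Sum.inl j) ∧ b = Sum.inr (Sum.inr (i, j))) ∨
  (∃ (k i : Fin n) (j : Fin m), k < i ∧ a = Sum.inl k ∧ b = Sum.inr (Sum.inr (i, j)))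

/-- An interfered `K¹_{n,m}`: all edges `x_i z_{i,j}` and `z_{i,j} y_j` are present,
and all other edges are of the form `x_k z_{i,j}` with `k < i`. -/
def IsInterfered (n m : ℕ) (G : SimpleGraph (IVert n m)) : Prop :=
  (∀ i j, G.Adj (Sum.inl i) (Sum.inr (Sum.inr (i, j)))) ∧
  (∀ i j, G.Adj (Sum.inr (Sum.inl j)) (Sum.inr (Sum.inr (i, j)))) ∧
  (∀ a b, G.Adj a b → InterferedAllowed n m a b ∨ InterferedAllowed n m b a)
/-! ### Long covers -/

/-- A long cover `(L⁰, L¹, L², L³)` of a set `C`. -/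
def IsLongCover {V : Type*} (G : SimpleGraph V) (L : Fin 4 → Set V) (C : Set V) : Prop :=
  (∀ i j : Fin 4, i ≠ j → Disjoint (L i) (L j)) ∧
  (∀ i : Fin 4, Disjoint (L i) C) ∧
  (G.induce (L 0)).Connected ∧
  Covers G (L 0) (L 1) ∧ Covers G (L 1) (L 2) ∧ Covers G (L 2) (L 3) ∧
  Covers G (L 3) C ∧
  AntiComplete G C (L 0) ∧ AntiComplete G C (L 1) ∧ AntiComplete G C (L 2) ∧
  AntiComplete G (L 0) (L 2) ∧ AntiComplete G (L 0) (L 3) ∧ AntiComplete G (L 1) (L 3)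

/-- A long `q`-cover of a set `C`. -/
def IsLongQCover {V : Type*} (G : SimpleGraph V) {q : ℕ}
    (ℒ : Fin q → Fin 4 → Set V) (C : Set V) : Prop :=
  (∀ i, IsLongCover G (ℒ i) C) ∧
  (∀ i j, i ≠ j →
    Disjoint (ℒ i 0 ∪ ℒ i 1 ∪ ℒ i 2 ∪ ℒ i 3) (ℒ j 0 ∪ ℒ j 1 ∪ ℒ j 2 ∪ ℒ j 3)) ∧
  (∀ i j, i < j →
    AntiComplete G (ℒ j 0 ∪ ℒ j 1 ∪ ℒ j 2) (ℒ i 0 ∪ ℒ i 1 ∪ ℒ i 2 ∪ ℒ i 3))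

/-! ### Multicovers -/

/-- A multicover `(N_x : x ∈ X)` of a set `C`, where `X` is presented as an
injective tuple `x : Fin m → V` (whose ordering is the total order on `X`). -/
def IsMulticover {V : Type*} (G : SimpleGraph V) {m : ℕ}
    (x : Fin m → V) (N : Fin m → Set V) (C : Set V) : Prop :=
  Function.Injective x ∧
  (∀ i, N i ⊆ G.neighborSet (x i)) ∧
  (∀ i, x i ∉ C) ∧
  (∀ i j, x i ∉ N j) ∧
  (∀ i, Disjoint (N i) C) ∧
  (∀ i j, i ≠ j → Disjoint (N i) (N j)) ∧
  (∀ i j, ¬ G.Adj (x i) (x j)) ∧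
  (∀ i, ∀ u ∈ C, ¬ G.Adj (x i) u) ∧
  (∀ i, ∀ u ∈ C, ∃ w ∈ N i, G.Adj w u) ∧
  (∀ i j, i < j → ∀ u ∈ N i, ¬ G.Adj (x j) u)

/-- A pure multicover: no `x ∈ X` has a neighbour in `N_y` for `y ≠ x`. -/
def IsPureMC {V : Type*} (G : SimpleGraph V) {m : ℕ}
    (x : Fin m → V) (N : Fin m → Set V) : Prop :=
  ∀ i j, i ≠ j → ∀ u ∈ N i, ¬ G.Adj (x j) u

/-- An impure multicover: for `x ≺ y`, `x` is complete to `N_y`. -/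
def IsImpureMC {V : Type*} (G : SimpleGraph V) {m : ℕ}
    (x : Fin m → V) (N : Fin m → Set V) : Prop :=
  ∀ i j, i < j → ∀ u ∈ N j, G.Adj (x i) u

/-! ### Auxiliary infrastructure -/

/-- Iso from concrete representation back to the graph. -/
noncomputable def toFinGraphIso {V : Type*} [Finite V] (G : SimpleGraph V) :
    (toFinGraph G).2 ≃g G where
  toEquiv := (Finite.equivFin V).symm
  map_rel_iff' := Iff.rfl

lemma hvm_trans {U V W : Type*} [Finite U] [Finite V] [Finite W]
    {G : SimpleGraph U} {H : SimpleGraph V} {K : SimpleGraph W}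
    (h1 : HasVertexMinor G H) (h2 : HasVertexMinor H K) : HasVertexMinor G K :=
  Relation.ReflTransGen.trans h1 h2

lemma hvm_of_iso {V W : Type*} [Finite V] [Finite W]
    {G : SimpleGraph V} {H : SimpleGraph W} (e : G ≃g H) : HasVertexMinor G H :=
  Relation.ReflTransGen.single (Or.inl ⟨((toFinGraphIso G).trans e).trans (toFinGraphIso H).symm⟩)

lemma hvm_localComp {V : Type*} [Finite V] (G : SimpleGraph V) (v : V) :
    HasVertexMinor G (localComp G v) := by
  refine Relation.ReflTransGen.single (Or.inr (Or.inl ⟨Finite.equivFin V v, ⟨?_⟩⟩))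
  have h : localComp ((toFinGraph G).2) (Finite.equivFin V v)
      = (toFinGraph (localComp G v)).2 := by
    ext a b
    show _ ↔ (localComp G v).Adj ((Finite.equivFin V).symm a) ((Finite.equivFin V).symm b)
    simp [toFinGraph, localComp, comap_adj, Equiv.symm_apply_apply]
    exact or_congr Iff.rfl (and_congr (not_congr (Equiv.apply_eq_iff_eq _).symm) Iff.rfl)
  rw [h]
  exact RelIso.refl _
lemma hvm_deleteVertex {V : Type*} [Finite V] (G : SimpleGraph V) (v : V) :
    HasVertexMinor G (G.induce {u | u ≠ v}) := by
  classical
  set e := Finite.equivFin V with he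
  refine Relation.ReflTransGen.single (Or.inr (Or.inr ⟨e v, ⟨?_⟩⟩))
  refine RelIso.trans ?_ (toFinGraphIso (G.induce {u | u ≠ v})).symm
  exact RelIso.mk (Equiv.subtypeEquiv e.symm
    (fun a => (not_congr (Equiv.symm_apply_eq e)).symm))
    (fun {a b} => Iff.rfl)

lemma hvm_induce_aux : ∀ (k : ℕ) (V : Type u) (_ : Finite V) (G : SimpleGraph V)
    (S : Set V), Nat.card V ≤ k → HasVertexMinor G (G.induce S) := by
  intro k
  induction k with
  | zero =>
    intro V hV G S hcard
    have : S = Set.univ := by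
      rw [Set.eq_univ_iff_forall]
      intro x
      have : Nat.card V ≠ 0 := Nat.card_ne_zero.2 ⟨⟨x⟩, hV⟩
      omega
    subst this
    exact hvm_of_iso (induceUnivIso G).symm
  | succ k ih =>
    intro V hV G S hcard
    classical
    by_cases hS : S = Set.univ
    · subst hS; exact hvm_of_iso (induceUnivIso G).symm
    · obtain ⟨v, hv⟩ := (Set.ne_univ_iff_exists_notMem S).1 hS
      have step := hvm_deleteVertex G v
      have hcard' : Nat.card {u : V // u ≠ v} ≤ k := by
        have : Fintype V := Fintype.ofFinite V
        have h1 : Fintype.card {u : V // u ≠ v} < Fintype.card V :=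
          Fintype.card_subtype_lt (x := v) (by simp)
        rw [Nat.card_eq_fintype_card] at hcard ⊢
        omega
      have step2 := ih {u : V // u ≠ v} inferInstance (G.induce {u | u ≠ v})
        {w | (w : V) ∈ S} hcard'
      refine hvm_trans step (hvm_trans step2 (hvm_of_iso ?_))
      refine ⟨⟨fun w => ⟨w.1.1, w.2⟩, fun u => ⟨⟨u.1, fun h => hv (h ▸ u.2)⟩, u.2⟩,
        fun w => rfl, fun u => rfl⟩, ?_⟩
      intro a b
      simp [comap_adj]
/-- Abbreviations for the three kinds of vertices. -/
abbrev xV {n m : ℕ} (i : Fin n) : IVert n m := Sum.inl i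
abbrev yV {n m : ℕ} (c : Fin m) : IVert n m := Sum.inr (Sum.inl c)
abbrev zV {n m : ℕ} (k : Fin n) (c : Fin m) : IVert n m := Sum.inr (Sum.inr (k, c))

lemma localComp_adj {V : Type*} (G : SimpleGraph V) (v a b : V) :
    (localComp G v).Adj a b ↔ Xor' (G.Adj a b) (a ≠ b ∧ G.Adj v a ∧ G.Adj v b) := by
  have hne : G.Adj a b → a ≠ b := G.ne_of_adj
  simp only [localComp, Xor', xor_def]
  tauto

lemma xor_xor_of_disjoint (p q r : Prop) (h : ¬(q ∧ r)) :
    Xor' (Xor' p q) r ↔ Xor' p (q ∨ r) := by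
  simp only [Xor', xor_def]; tauto

lemma xor_iff_or_of_disjoint (p q : Prop) (h : ¬(p ∧ q)) : Xor' p q ↔ p ∨ q := by
  simp only [Xor', xor_def]; tauto

lemma kOneBip_adj_x {n m : ℕ} (i : Fin n) (b : IVert n m) :
    (KOneBip n m).Adj (xV i) b ↔ ∃ c, b = zV i c := by
  simp only [KOneBip, fromRel_adj]
  constructor
  · rintro ⟨hne, (⟨i', j', (⟨h1, h2⟩ | ⟨h1, h2⟩)⟩ | ⟨i', j', (⟨h1, h2⟩ | ⟨h1, h2⟩)⟩)⟩ <;>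
      simp_all
  · rintro ⟨c, rfl⟩
    exact ⟨by simp, Or.inl ⟨i, c, Or.inl ⟨rfl, rfl⟩⟩⟩

lemma kOneBip_adj_y {n m : ℕ} (c : Fin m) (b : IVert n m) :
    (KOneBip n m).Adj (yV c) b ↔ ∃ k, b = zV k c := by
  simp only [KOneBip, fromRel_adj]
  constructor
  · rintro ⟨hne, (⟨i', j', (⟨h1, h2⟩ | ⟨h1, h2⟩)⟩ | ⟨i', j', (⟨h1, h2⟩ | ⟨h1, h2⟩)⟩)⟩ <;>
      simp_all
  · rintro ⟨k, rfl⟩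
    exact ⟨by simp, Or.inl ⟨k, c, Or.inr ⟨rfl, rfl⟩⟩⟩

lemma kOneBip_adj_z {n m : ℕ} (k : Fin n) (c : Fin m) (b : IVert n m) :
    (KOneBip n m).Adj (zV k c) b ↔ b = xV k ∨ b = yV c := by
  simp only [KOneBip, fromRel_adj]
  constructor
  · rintro ⟨hne, (⟨i', j', (⟨h1, h2⟩ | ⟨h1, h2⟩)⟩ | ⟨i', j', (⟨h1, h2⟩ | ⟨h1, h2⟩)⟩)⟩ <;>
      simp_all
  · rintro (rfl | rfl)
    · exact ⟨by simp, Or.inr ⟨k, c, Or.inl ⟨rfl, rfl⟩⟩⟩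
    · exact ⟨by simp, Or.inr ⟨k, c, Or.inr ⟨rfl, rfl⟩⟩⟩
set_option linter.unreachableTactic false
set_option linter.unusedTactic false

/-- Membership in the toggled clique: `x_i`, `x_j`, and the column-`c` subdivision
vertices. -/
lemma xor_congr' {p p' q q' : Prop} (h1 : p ↔ p') (h2 : q ↔ q') :
    Xor' p q ↔ Xor' p' q' := by simp only [Xor', xor_def]; tauto

def inS {n m : ℕ} (i j : Fin n) (c : Fin m) (t : IVert n m) : Prop :=
  t = xV i ∨ t = xV j ∨ ∃ k, t = zV k c

/-- The set of adjacencies toggled by the three local complementations. -/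
def Tog {n m : ℕ} (i j : Fin n) (c : Fin m) (a b : IVert n m) : Prop :=
  ((a = xV i ∧ b = yV c) ∨ (a = yV c ∧ b = xV i)) ∨
  ((a = xV j ∧ b = yV c) ∨ (a = yV c ∧ b = xV j)) ∨
  (a ≠ b ∧ inS i j c a ∧ inS i j c b)

lemma triple_adj {n m : ℕ} (H : SimpleGraph (IVert n m)) (i j : Fin n) (c : Fin m)
    (hne : i ≠ j)
    (hz : ∀ k b, H.Adj (zV k c) b ↔ (b = xV k ∨ b = yV c))
    (hy : ∀ b, H.Adj (yV c) b ↔ ∃ k, b = zV k c)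
    (a b : IVert n m) :
    (localComp (localComp (localComp H (zV i c)) (zV j c)) (yV c)).Adj a b ↔
      Xor' (H.Adj a b) (Tog i j c a b) := by
  have hxy : ∀ (k : Fin n), xV (m := m) k ≠ yV c := by simp
  have hxz : ∀ (k k' : Fin n) (c' : Fin m), xV k ≠ zV k' c' := by simp
  have hyz : ∀ (k : Fin n), yV (m := m) c ≠ zV k c := by simp
  -- step 1
  have h1 : ∀ a b, (localComp H (zV i c)).Adj a b ↔
      Xor' (H.Adj a b) ((a = xV i ∧ b = yV c) ∨ (a = yV c ∧ b = xV i)) := by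
    intro a b
    rw [localComp_adj]
    apply xor_congr' Iff.rfl
    rw [hz, hz]
    constructor
    · rintro ⟨hab, (rfl | rfl), (rfl | rfl)⟩ <;> tauto
    · rintro (⟨rfl, rfl⟩ | ⟨rfl, rfl⟩) <;> exact ⟨by simp, by tauto, by tauto⟩
  -- step 2
  have h1z : ∀ b, (localComp H (zV i c)).Adj (zV j c) b ↔ (b = xV j ∨ b = yV c) := by
    intro b
    rw [h1, xor_iff_or_of_disjoint]
    · rw [hz]; simp
    · rintro ⟨_, (⟨h, _⟩ | ⟨h, _⟩)⟩ <;> simp at h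
  have h2 : ∀ a b, (localComp (localComp H (zV i c)) (zV j c)).Adj a b ↔
      Xor' (H.Adj a b)
        (((a = xV i ∧ b = yV c) ∨ (a = yV c ∧ b = xV i)) ∨
         ((a = xV j ∧ b = yV c) ∨ (a = yV c ∧ b = xV j))) := by
    intro a b
    rw [localComp_adj, h1, xor_xor_of_disjoint]
    · apply xor_congr' Iff.rfl
      apply or_congr Iff.rfl
      rw [h1z, h1z]
      constructor
      · rintro ⟨hab, (rfl | rfl), (rfl | rfl)⟩ <;> tauto
      · rintro (⟨rfl, rfl⟩ | ⟨rfl, rfl⟩) <;> exact ⟨by simp, by tauto, by tauto⟩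
    · rintro ⟨(⟨rfl, rfl⟩ | ⟨rfl, rfl⟩), hab, h1, h2⟩ <;> rw [h1z] at h1 h2 <;>
        simp_all [hne]
  -- step 3
  have h2y : ∀ b, (localComp (localComp H (zV i c)) (zV j c)).Adj (yV c) b ↔
      inS i j c b := by
    intro b
    rw [h2, xor_iff_or_of_disjoint]
    · rw [hy]
      unfold inS
      constructor
      · rintro ((⟨k, rfl⟩) | ((⟨h, rfl⟩ | ⟨_, rfl⟩) | (⟨h, rfl⟩ | ⟨_, rfl⟩))) <;>
          first
          | (exact Or.inr (Or.inr ⟨_, rfl⟩))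
          | (simp at h)
          | tauto
      · rintro (rfl | rfl | ⟨k, rfl⟩) <;> tauto
    · rintro ⟨hadj, hrest⟩
      rw [hy] at hadj
      obtain ⟨k, rfl⟩ := hadj
      rcases hrest with (⟨h, _⟩ | ⟨_, h⟩) | (⟨h, _⟩ | ⟨_, h⟩) <;> simp at h
  rw [localComp_adj, h2, xor_xor_of_disjoint]
  · unfold Tog
    apply xor_congr' Iff.rfl
    rw [h2y, h2y]
    tauto
  · rintro ⟨h12, hab, ha, hb⟩
    rw [h2y] at ha hb
    have : inS i j c (yV c) := by
      rcases h12 with (⟨rfl, rfl⟩ | ⟨rfl, rfl⟩) | (⟨rfl, rfl⟩ | ⟨rfl, rfl⟩) <;> assumption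
    rcases this with h | h | ⟨k, h⟩ <;> simp at h
/-- The column index assigned to a pair `i < j`. -/
def colIdx {n : ℕ} (p : Fin n × Fin n) (hp : p.1 < p.2) : Fin (n.choose 2) :=
  ⟨(p.2 : ℕ).choose 2 + (p.1 : ℕ), by
    have h1 : (p.2 : ℕ).choose 2 + (p.1 : ℕ) < (p.2 : ℕ).choose 2 + (p.2 : ℕ) := by
      have := hp; omega
    have h2 : (p.2 : ℕ).choose 2 + (p.2 : ℕ) = ((p.2 : ℕ) + 1).choose 2 := by
      rw [Nat.choose_succ_succ]
      simp [Nat.choose_one_right, Nat.add_comm]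
    have h3 : ((p.2 : ℕ) + 1).choose 2 ≤ n.choose 2 :=
      Nat.choose_le_choose 2 p.2.2
    omega⟩

lemma colIdx_lt_val {n : ℕ} (p : Fin n × Fin n) (hp : p.1 < p.2) :
    (p.2 : ℕ).choose 2 ≤ (colIdx p hp : ℕ) ∧
      (colIdx p hp : ℕ) < ((p.2 : ℕ) + 1).choose 2 := by
  constructor
  · simp [colIdx]
  · have h2 : ((p.2 : ℕ) + 1).choose 2 = (p.2 : ℕ).choose 2 + (p.2 : ℕ) := by
      rw [Nat.choose_succ_succ]
      simp [Nat.choose_one_right, Nat.add_comm]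
    have := hp
    simp only [colIdx, h2]
    omega

lemma colIdx_injective {n : ℕ} (p q : Fin n × Fin n) (hp : p.1 < p.2)
    (hq : q.1 < q.2) (h : colIdx p hp = colIdx q hq) : p = q := by
  have h2 : ∀ (r : Fin n × Fin n) (hr : r.1 < r.2),
      ((r.2 : ℕ) + 1).choose 2 = (r.2 : ℕ).choose 2 + (r.2 : ℕ) := by
    intro r hr
    rw [Nat.choose_succ_succ]
    simp [Nat.choose_one_right, Nat.add_comm]
  have heq : (p.2 : ℕ).choose 2 + (p.1 : ℕ) = (q.2 : ℕ).choose 2 + (q.1 : ℕ) :=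
    congrArg Fin.val h
  have h22 : (p.2 : ℕ) = (q.2 : ℕ) := by
    rcases Nat.lt_trichotomy (p.2 : ℕ) (q.2 : ℕ) with hlt | heq' | hgt
    · exfalso
      have := h2 p hp
      have hle : ((p.2 : ℕ) + 1).choose 2 ≤ (q.2 : ℕ).choose 2 :=
        Nat.choose_le_choose 2 hlt
      have := hp; have := hq; omega
    · exact heq'
    · exfalso
      have := h2 q hq
      have hle : ((q.2 : ℕ) + 1).choose 2 ≤ (p.2 : ℕ).choose 2 :=
        Nat.choose_le_choose 2 hgt
      have := hp; have := hq; omega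
  have hcc : ((p.2 : ℕ)).choose 2 = ((q.2 : ℕ)).choose 2 := by rw [h22]
  have h11 : (p.1 : ℕ) = (q.1 : ℕ) := by omega
  exact Prod.ext (Fin.ext h11) (Fin.ext h22)
lemma xorNotRight' (p q : Prop) (h : ¬q) : Xor' p q ↔ p := by
  simp only [Xor', xor_def]; tauto

lemma tog_xx {n m : ℕ} (i j : Fin n) (c : Fin m) (hne : i ≠ j) (a b : Fin n) :
    Tog i j c (xV a) (xV b) ↔ ((a = i ∧ b = j) ∨ (a = j ∧ b = i)) := by
  unfold Tog inS
  constructor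
  · rintro ((⟨_, h⟩ | ⟨h, _⟩) | (⟨_, h⟩ | ⟨h, _⟩) | ⟨hab, (h1 | h1 | ⟨k, h1⟩), (h2 | h2 | ⟨k', h2⟩)⟩) <;>
      simp_all <;> tauto
  · rintro (⟨rfl, rfl⟩ | ⟨rfl, rfl⟩) <;>
      exact Or.inr (Or.inr ⟨by simp [hne, hne.symm], by tauto, by tauto⟩)

lemma tog_y {n m : ℕ} (i j : Fin n) (c c' : Fin m) (hcc : c' ≠ c) (b : IVert n m) :
    ¬ Tog i j c (yV c') b := by
  unfold Tog inS
  rintro ((⟨h, _⟩ | ⟨h, _⟩) | (⟨h, _⟩ | ⟨h, _⟩) | ⟨_, (h | h | ⟨k, h⟩), _⟩) <;>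
    simp_all

lemma tog_z {n m : ℕ} (i j : Fin n) (c c' : Fin m) (hcc : c' ≠ c) (k : Fin n)
    (b : IVert n m) : ¬ Tog i j c (zV k c') b := by
  unfold Tog inS
  rintro ((⟨h, _⟩ | ⟨h, _⟩) | (⟨h, _⟩ | ⟨h, _⟩) | ⟨_, (h | h | ⟨k', h⟩), _⟩) <;>
    simp_all

lemma main_ind {n : ℕ} (E : Finset (Fin n × Fin n)) (hE : ∀ p ∈ E, p.1 < p.2) :
    ∃ H : SimpleGraph (IVert n (n.choose 2)),
      HasVertexMinor (KOneBip n (n.choose 2)) H ∧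
      (∀ i k : Fin n, H.Adj (xV i) (xV k) ↔ ((i, k) ∈ E ∨ (k, i) ∈ E)) ∧
      (∀ c : Fin (n.choose 2),
        (∀ p (hp : p.1 < p.2), p ∈ E → colIdx p hp ≠ c) →
        (∀ b, H.Adj (yV c) b ↔ ∃ k, b = zV k c) ∧
        (∀ k b, H.Adj (zV k c) b ↔ (b = xV k ∨ b = yV c))) := by
  classical
  induction E using Finset.induction_on with
  | empty =>
    refine ⟨KOneBip n (n.choose 2), Relation.ReflTransGen.refl, ?_, ?_⟩
    · intro i k
      rw [kOneBip_adj_x]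
      simp
    · intro c _
      exact ⟨kOneBip_adj_y c, fun k b => kOneBip_adj_z k c b⟩
  | @insert p E hpE ih =>
    have hp : p.1 < p.2 := hE p (Finset.mem_insert_self p E)
    have hne : p.1 ≠ p.2 := Fin.ne_of_lt hp
    obtain ⟨H, hH, hb, hc⟩ := ih (fun q hq => hE q (Finset.mem_insert_of_mem hq))
    set c := colIdx p hp with hcdef
    have hcols : ∀ q (hq : q.1 < q.2), q ∈ E → colIdx q hq ≠ c := by
      intro q hq hqE heq
      exact hpE (colIdx_injective q p hq hp heq ▸ hqE)
    obtain ⟨hy', hz'⟩ := hc c hcols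
    have hT := triple_adj H p.1 p.2 c hne hz' hy'
    refine ⟨localComp (localComp (localComp H (zV p.1 c)) (zV p.2 c)) (yV c),
      hvm_trans hH (hvm_trans (hvm_localComp _ _)
        (hvm_trans (hvm_localComp _ _) (hvm_localComp _ _))), ?_, ?_⟩
    · intro i k
      rw [hT]
      have hold : H.Adj (xV i) (xV k) ↔ ((i, k) ∈ E ∨ (k, i) ∈ E) := hb i k
      rw [xor_iff_or_of_disjoint]
      · rw [hold, tog_xx _ _ _ hne]
        simp only [Finset.mem_insert, Prod.ext_iff]
        constructor
        · rintro ((h | h) | (⟨rfl, rfl⟩ | ⟨rfl, rfl⟩)) <;> tauto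
        · rintro (h | h) <;> tauto
      · rw [hold, tog_xx _ _ _ hne]
        rintro ⟨(h | h), (⟨rfl, rfl⟩ | ⟨rfl, rfl⟩)⟩
        · exact hpE (by simpa using h)
        · exact absurd (hE _ (Finset.mem_insert_of_mem h)) (by simp [Fin.lt_asymm hp])
        · exact absurd (hE _ (Finset.mem_insert_of_mem h)) (by simp [Fin.lt_asymm hp])
        · exact hpE (by simpa using h)
    · intro c' hc'
      have hcc : c' ≠ c :=
        fun h => hc' p hp (Finset.mem_insert_self p E) (h ▸ rfl)
      obtain ⟨hy0, hz0⟩ := hc c'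
        (fun q hq hqE => hc' q hq (Finset.mem_insert_of_mem hqE))
      constructor
      · intro b
        rw [hT, xorNotRight' _ _ (tog_y _ _ _ _ hcc b)]
        exact hy0 b
      · intro k b
        rw [hT, xorNotRight' _ _ (tog_z _ _ _ _ hcc k b)]
        exact hz0 k b
/-- **Lemma 2.1.** The graph `K¹_{n, C(n,2)}` contains every `n`-vertex graph as a
vertex-minor. -/
theorem kOneBip_contains_all_as_vertexMinor (n : ℕ) (hn : 0 < n)
    (W : Type) [Fintype W] (hW : Fintype.card W = n) (G : SimpleGraph W) :
    HasVertexMinor (KOneBip n (n.choose 2)) G := by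
  classical
  set e : W ≃ Fin n := Fintype.equivFinOfCardEq hW with he
  set E : Finset (Fin n × Fin n) :=
    Finset.univ.filter (fun p => G.Adj (e.symm p.1) (e.symm p.2) ∧ p.1 < p.2) with hEdef
  have hE : ∀ p ∈ E, p.1 < p.2 := by
    intro p hp
    simp only [hEdef, Finset.mem_filter] at hp
    exact hp.2.2
  obtain ⟨H, hH, hb, -⟩ := main_ind E hE
  have hkey : ∀ i k : Fin n, H.Adj (xV i) (xV k) ↔ G.Adj (e.symm i) (e.symm k) := by
    intro i k
    rw [hb]
    simp only [hEdef, Finset.mem_filter, Finset.mem_univ, true_and]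
    constructor
    · rintro (⟨h, _⟩ | ⟨h, _⟩)
      · exact h
      · exact h.symm
    · intro h
      rcases lt_trichotomy i k with hlt | heq | hgt
      · exact Or.inl ⟨h, hlt⟩
      · subst heq; exact (G.irrefl h).elim
      · exact Or.inr ⟨h.symm, hgt⟩
  set X : Set (IVert n (n.choose 2)) := Set.range Sum.inl with hX
  have hind := hvm_induce_aux (Nat.card (IVert n (n.choose 2))) _ inferInstance H X le_rfl
  refine hvm_trans hH (hvm_trans hind (hvm_of_iso ?_))
  have hcoe : ∀ a : ↥X, (Sum.inl ((Equiv.ofInjective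
        (Sum.inl : Fin n → IVert n (n.choose 2)) Sum.inl_injective).symm a))
      = (a : IVert n (n.choose 2)) :=
    fun a => Equiv.apply_ofInjective_symm Sum.inl_injective a
  refine RelIso.mk ((Equiv.ofInjective Sum.inl Sum.inl_injective).symm.trans e.symm)
    (fun {a b} => ?_)
  have hadj : (H.induce X).Adj a b ↔ H.Adj (a : IVert n (n.choose 2)) b := Iff.rfl
  rw [hadj, ← hcoe a, ← hcoe b, hkey]
  exact Iff.rfl
end

section
/- Let c, k, κ be positive integers. Let G be a graph with χ^{(8)}(G) ≤ κ and let C ⊆ V(G) satisfy χ(G[C]) ≥ c + kκ. Then there is a lollipop (P, C′) contained in C with χ(G[C′]) ≥ c, together with a k-stripe of (P, C′). -/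
open SimpleGraph

set_option linter.unusedSectionVars false
set_option maxHeartbeats 1000000

lemma distGE_symm {V : Type*} {G : SimpleGraph V} {u v : V} {n : ℕ}
    (h : distGE G u v n) : distGE G v u n := by
  intro p
  have := h p.reverse
  simpa using this

lemma distGE_ne {V : Type*} {G : SimpleGraph V} {u v : V}
    (h : distGE G u v 8) : u ≠ v := by
  rintro rfl
  simpa using h Walk.nil

lemma colorable_of_chi_le {W : Type*} [Finite W] (H : SimpleGraph W) {n : ℕ}
    (h : chi H ≤ n) : H.Colorable n :=
  (H.colorable_chromaticNumber_of_fintype).mono h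

lemma chi_le_of_colorable {W : Type*} {H : SimpleGraph W} {n : ℕ}
    (h : H.Colorable n) : chi H ≤ n := by
  have := h.chromaticNumber_le
  exact (ENat.toNat_le_toNat this (by simp)).trans (by simp)

lemma chi_induce_mono {V : Type*} (G : SimpleGraph V) [Finite V] {A B : Set V} (h : A ⊆ B) :
    chi (G.induce A) ≤ chi (G.induce B) := by
  have hB : (G.induce B).Colorable (chi (G.induce B)) := colorable_of_chi_le _ le_rfl
  obtain ⟨c⟩ := hB
  exact chi_le_of_colorable ⟨c.comp (SimpleGraph.induceHomOfLE G h).toHom⟩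

lemma chi_induce_union_le {V : Type*} (G : SimpleGraph V) [Finite V] (A B : Set V) :
    chi (G.induce (A ∪ B)) ≤ chi (G.induce A) + chi (G.induce B) := by
  classical
  obtain ⟨cA⟩ : (G.induce A).Colorable (chi (G.induce A)) := colorable_of_chi_le _ le_rfl
  obtain ⟨cB⟩ : (G.induce B).Colorable (chi (G.induce B)) := colorable_of_chi_le _ le_rfl
  refine chi_le_of_colorable ⟨Coloring.mk
    (fun v => if h : v.1 ∈ A then Fin.castAdd _ (cA ⟨v.1, h⟩)
      else Fin.natAdd _ (cB ⟨v.1, v.2.resolve_left h⟩)) ?_⟩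
  rintro ⟨u, hu⟩ ⟨v, hv⟩ hadj
  have hG : G.Adj u v := hadj
  by_cases h1 : u ∈ A <;> by_cases h2 : v ∈ A <;>
    simp only [h1, h2, dif_pos, dif_neg, not_false_iff]
  · intro hc
    have : (G.induce A).Adj ⟨u, h1⟩ ⟨v, h2⟩ := hG
    have := cA.valid this
    exact this (by apply Fin.ext; simpa using congrArg Fin.val hc)
  · intro hc
    have := congrArg Fin.val hc
    simp [Fin.castAdd, Fin.natAdd] at this
    omega
  · intro hc
    have := congrArg Fin.val hc
    simp [Fin.castAdd, Fin.natAdd] at this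
    omega
  · intro hc
    have : (G.induce B).Adj ⟨u, hu.resolve_left h1⟩ ⟨v, hv.resolve_left h2⟩ := hG
    have := cB.valid this
    exact this (by apply Fin.ext; simpa using congrArg Fin.val hc)

lemma chi_induce_le_of_subset_ball {V : Type*} (G : SimpleGraph V) [Fintype V] {κ : ℕ}
    (hball : chiBall G 8 ≤ κ) {S : Set V} {v : V} (h : S ⊆ ballSet G v 8) :
    chi (G.induce S) ≤ κ := by
  refine le_trans (chi_induce_mono G h) (le_trans ?_ hball)
  unfold chiBall
  exact le_ciSup (Set.Finite.bddAbove (Set.finite_range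
    (fun v => chi (G.induce (ballSet G v 8))))) v

lemma nonempty_of_chi_pos {V : Type*} (G : SimpleGraph V) [Finite V] {S : Set V}
    (h : 1 ≤ chi (G.induce S)) : S.Nonempty := by
  by_contra hS
  rw [Set.not_nonempty_iff_eq_empty] at hS
  subst hS
  have : (G.induce (∅ : Set V)).Colorable 0 := Colorable.of_isEmpty 0
  have := chi_le_of_colorable this
  omega

lemma exists_adj_of_two_le_chi {V : Type*} (G : SimpleGraph V) [Finite V] {S : Set V}
    (h : 2 ≤ chi (G.induce S)) : ∃ a ∈ S, ∃ b ∈ S, G.Adj a b := by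
  by_contra hS
  push_neg at hS
  have : (G.induce S).Colorable 1 := by
    refine ⟨Coloring.mk (fun _ => 0) ?_⟩
    rintro ⟨u, hu⟩ ⟨v, hv⟩ hadj
    exact absurd hadj (hS u hu v hv)
  have := chi_le_of_colorable this
  omega

lemma reachable_induce_of_walk {W : Type*} {H : SimpleGraph W} {T : Set W} :
    ∀ {u v : W} (w : H.Walk u v) (hs : ∀ x ∈ w.support, x ∈ T),
    (H.induce T).Reachable ⟨u, hs u w.start_mem_support⟩ ⟨v, hs v w.end_mem_support⟩ := by
  intro u v w
  induction w with
  | nil => intro _; exact Reachable.refl _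
  | @cons a b c h p ih =>
    intro hs
    have hb : ∀ x ∈ p.support, x ∈ T := fun x hx => hs x (by simp [hx])
    have hadj : (H.induce T).Adj ⟨a, hs a (Walk.start_mem_support _)⟩
        ⟨b, hb b (Walk.start_mem_support _)⟩ := by
      simp only [comap_adj, Function.Embedding.coe_subtype]
      exact h
    exact (hadj.reachable).trans (ih hb)

lemma exists_connected_subset_chi_ge {V : Type*} (G : SimpleGraph V) [Fintype V] {S : Set V}
    (h1 : 1 ≤ chi (G.induce S)) :
    ∃ M, M ⊆ S ∧ M.Nonempty ∧ (G.induce M).Connected ∧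
      chi (G.induce S) ≤ chi (G.induce M) := by
  classical
  set H := G.induce S with hH
  set n := chi H with hn
  by_cases hex : ∃ K : H.ConnectedComponent, n ≤ chi (H.induce K.supp)
  · obtain ⟨K, hK⟩ := hex
    obtain ⟨v₀, hv₀⟩ := K.exists_rep
    have hv₀m : v₀ ∈ K.supp := by rw [ConnectedComponent.mem_supp_iff]; exact hv₀
    have iso : (H.induce K.supp) ≃g (G.induce (Subtype.val '' K.supp)) := by
      refine ⟨Equiv.Set.image Subtype.val K.supp Subtype.val_injective, ?_⟩
      intro x y
      simp only [Equiv.Set.image, Equiv.Set.imageOfInjOn, comap_adj,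
        Function.Embedding.coe_subtype, Equiv.coe_fn_mk]
      rfl
    refine ⟨Subtype.val '' K.supp, ?_, ?_, ?_, ?_⟩
    · rintro x ⟨y, _, rfl⟩; exact y.2
    · exact ⟨v₀.1, ⟨v₀, hv₀m, rfl⟩⟩
    · have hsuppconn : (H.induce K.supp).Connected := by
        haveI : Nonempty ↥K.supp := ⟨⟨v₀, hv₀m⟩⟩
        refine ⟨?_⟩
        rintro ⟨x, hx⟩ ⟨y, hy⟩
        have hr : H.Reachable x y := by
          rw [ConnectedComponent.mem_supp_iff] at hx hy
          exact ConnectedComponent.exact (hx.trans hy.symm)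
        obtain ⟨w⟩ := hr
        have hsup : ∀ z ∈ w.support, z ∈ K.supp := by
          intro z hz
          rw [ConnectedComponent.mem_supp_iff]
          have hr2 : H.Reachable x z := ⟨w.takeUntil z hz⟩
          rw [ConnectedComponent.mem_supp_iff] at hx
          exact (ConnectedComponent.sound hr2).symm.trans hx
        exact reachable_induce_of_walk w hsup
      exact hsuppconn.map iso.toHom iso.toEquiv.surjective
    · refine le_trans hK (chi_le_of_colorable ?_)
      exact Colorable.of_hom iso.toHom (colorable_of_chi_le _ le_rfl)
  · exfalso
    push_neg at hex
    have hcol : ∀ K : H.ConnectedComponent, (H.induce K.supp).Colorable (n - 1) := by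
      intro K
      exact colorable_of_chi_le _ (by have := hex K; omega)
    let f : ∀ K : H.ConnectedComponent, (H.induce K.supp).Coloring (Fin (n-1)) :=
      fun K => (hcol K).some
    let F : ∀ (K : H.ConnectedComponent) (w : ↥S), w ∈ K.supp → Fin (n-1) :=
      fun K w hw => f K ⟨w, hw⟩
    have key : ∀ (K K' : H.ConnectedComponent), K = K' → ∀ (w : ↥S) hw hw',
        F K w hw = F K' w hw' := by rintro K _ rfl w hw hw'; rfl
    have hcolH : H.Colorable (n - 1) := by
      refine ⟨Coloring.mk
        (fun w => F (H.connectedComponentMk w) w (by rw [ConnectedComponent.mem_supp_iff])) ?_⟩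
      intro u v hadj hc
      have hKuv : H.connectedComponentMk u = H.connectedComponentMk v :=
        ConnectedComponent.sound hadj.reachable
      have hv' : v ∈ (H.connectedComponentMk u).supp := by
        rw [ConnectedComponent.mem_supp_iff]; exact hKuv.symm
      rw [key _ _ hKuv.symm v _ hv'] at hc
      have hadj' : (H.induce (H.connectedComponentMk u).supp).Adj
          ⟨u, by rw [ConnectedComponent.mem_supp_iff]⟩ ⟨v, hv'⟩ := by
        simp only [comap_adj, Function.Embedding.coe_subtype]
        exact hadj
      exact (f _).valid hadj' hc
    have := chi_le_of_colorable hcolH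
    omega

section WalkHelpers
variable {V : Type*} {G : SimpleGraph V}

lemma isPath_nil_of_loop {u : V} (w : G.Walk u u) (hw : w.IsPath) : w = Walk.nil := by
  cases w with
  | nil => rfl
  | cons r p => exact absurd (Walk.end_mem_support p) ((Walk.cons_isPath_iff _ _).mp hw).2

lemma dropUntil_start [DecidableEq V] {u v : V} (w : G.Walk u v) (hw : w.IsPath)
    (h : u ∈ w.support) : w.dropUntil u h = w := by
  have hspec := w.take_spec h
  have htp : (w.takeUntil u h).IsPath := hw.takeUntil h
  have : w.takeUntil u h = Walk.nil := isPath_nil_of_loop _ htp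
  rw [this] at hspec
  simpa using hspec

lemma dropUntil_cons_ne [DecidableEq V] {u b v x : V} (r : G.Adj u b) (p : G.Walk b v)
    (hne : u ≠ x) (h : x ∈ (Walk.cons r p).support) :
    (Walk.cons r p).dropUntil x h = p.dropUntil x
      (by rw [Walk.support_cons, List.mem_cons] at h
          rcases h with h' | h' <;> [exact absurd h'.symm hne; exact h']) := by
  simp [Walk.dropUntil, hne]

lemma mem_dropUntil_or [DecidableEq V] {u v : V} (q : G.Walk u v) (hq : q.IsPath) :
    ∀ {x y : V} (hx : x ∈ q.support) (hy : y ∈ q.support),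
    y ∈ (q.dropUntil x hx).support ∨ x ∈ (q.dropUntil y hy).support := by
  induction q with
  | nil =>
    intro x y hx hy
    rw [Walk.mem_support_nil_iff] at hx hy
    subst hx; subst hy
    exact Or.inl (Walk.start_mem_support _)
  | @cons a b c r p ih =>
    intro x y hx hy
    by_cases hxa : x = a
    · subst hxa
      rw [dropUntil_start _ hq hx]
      exact Or.inl hy
    · by_cases hya : y = a
      · subst hya
        rw [dropUntil_start _ hq hy]
        exact Or.inr hx
      · have hx' : x ∈ p.support := by
          have h2 := hx; rw [Walk.support_cons, List.mem_cons] at h2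
          exact h2.resolve_left hxa
        have hy' : y ∈ p.support := by
          have h2 := hy; rw [Walk.support_cons, List.mem_cons] at h2
          exact h2.resolve_left hya
        rw [dropUntil_cons_ne r p (fun h => hxa h.symm) hx,
          dropUntil_cons_ne r p (fun h => hya h.symm) hy]
        exact ih ((Walk.cons_isPath_iff _ _).mp hq).1 hx' hy'

lemma toSubgraph_adj_of_length_one {u v : V} (w : G.Walk u v) (h : w.length = 1) :
    w.toSubgraph.Adj u v := by
  cases w with
  | nil => simp at h
  | cons r p =>
    cases p with
    | nil => simp
    | cons r' p' => simp [Walk.length_cons] at h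

lemma prefix_to_target {M : Set V} :
    ∀ {u v : V} (w : G.Walk u v), u ∉ M → v ∈ M →
    ∃ (v' : V) (q : G.Walk u v'), (∀ z ∈ q.support, z ∈ w.support) ∧
      (∃ m ∈ M, G.Adj v' m) ∧ q.length < w.length := by
  intro u v w
  induction w with
  | nil => intro hu hv; exact absurd hv hu
  | @cons a b c r p ih =>
    intro hu hv
    by_cases hb : b ∈ M
    · exact ⟨a, Walk.nil, by simp, ⟨b, hb, r⟩, by simp [Walk.length_cons]⟩
    · obtain ⟨v', q, hsub, hm, hlen⟩ := ih hb hv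
      refine ⟨v', Walk.cons r q, ?_, hm, by simp [Walk.length_cons]; omega⟩
      intro z hz
      rw [Walk.support_cons, List.mem_cons] at hz
      rcases hz with h' | h'
      · simp [h']
      · simp [hsub z h']

end WalkHelpers

section Route
variable {V : Type*} [Fintype V] {G : SimpleGraph V}

lemma route {D M Qs : Set V} {t : V}
    (hconn : (G.induce D).Connected) (hMD : M ⊆ D) (hMne : M.Nonempty)
    (hMball : ∀ m ∈ M, m ∉ ballSet G t 8)
    (hsrc : ∃ y ∈ D, G.Adj t y)
    (hQD : ∀ w ∈ Qs, w ∈ D → w = t) :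
    ∃ (b₀ t' : V) (q : G.Walk b₀ t'), q.IsPath ∧
      (∀ x ∈ q.support, x ∈ D ∧ x ∉ Qs ∧ x ∉ M ∧ x ≠ t) ∧
      G.Adj t b₀ ∧ (∀ x ∈ q.support, G.Adj t x → x = b₀) ∧
      (∃ m ∈ M, G.Adj t' m) ∧ (∀ x ∈ q.support, (∃ m ∈ M, G.Adj x m) → x = t') ∧
      (∀ x ∈ q.support, ∀ y ∈ q.support, G.Adj x y → q.toSubgraph.Adj x y) := by
  classical
  -- neighbours (up to distance 7) of t are not in M
  have hnotM : ∀ z : V, (∃ p : G.Walk t z, p.length ≤ 8) → z ∉ M := by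
    intro z hz hzM
    exact hMball z hzM hz
  have hadjM : ∀ z : V, G.Adj t z → z ∉ M := fun z hz =>
    hnotM z ⟨Walk.cons hz Walk.nil, by simp⟩
  -- candidate walks
  let Cand : ∀ u v : V, G.Walk u v → Prop := fun u v w =>
    (∀ z ∈ w.support, z ∈ D) ∧ G.Adj t u ∧ ∃ m ∈ M, G.Adj v m
  let Lens : Set ℕ := {n | ∃ u v : V, ∃ w : G.Walk u v, Cand u v w ∧ w.length = n}
  -- existence of a candidate
  have hLne : Lens.Nonempty := by
    obtain ⟨y, hyD, hty⟩ := hsrc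
    obtain ⟨m₀, hm₀⟩ := hMne
    obtain ⟨W⟩ := hconn.preconnected ⟨y, hyD⟩ ⟨m₀, hMD hm₀⟩
    let f : G.induce D →g G := ⟨Subtype.val, fun {a b} h => h⟩
    let W' : G.Walk y m₀ := W.map f
    have hW'D : ∀ z ∈ W'.support, z ∈ D := by
      intro z hz
      rw [Walk.support_map, List.mem_map] at hz
      obtain ⟨⟨z', hz'⟩, _, rfl⟩ := hz
      exact hz'
    have hyM : y ∉ M := hadjM y hty
    obtain ⟨v', q, hsub, hm, _⟩ := prefix_to_target W' hyM hm₀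
    exact ⟨q.length, y, v', q, ⟨fun z hz => hW'D z (hsub z hz), hty, hm⟩, rfl⟩
  set N := sInf Lens with hN
  obtain ⟨u₀, v₀, w₀, hcand₀, hlen₀⟩ := Nat.sInf_mem hLne
  have hmin : ∀ (u v : V) (w : G.Walk u v), Cand u v w → N ≤ w.length := by
    intro u v w hw
    exact Nat.sInf_le ⟨u, v, w, hw, rfl⟩
  set q := w₀.bypass with hqdef
  have hqpath : q.IsPath := Walk.bypass_isPath w₀
  have hqsub : ∀ z ∈ q.support, z ∈ w₀.support := fun z hz => Walk.support_bypass_subset w₀ hz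
  have hqcand : Cand u₀ v₀ q := ⟨fun z hz => hcand₀.1 z (hqsub z hz), hcand₀.2.1, hcand₀.2.2⟩
  have hqlen : q.length = N := le_antisymm
    ((Walk.length_bypass_le w₀).trans_eq hlen₀) (hmin _ _ q hqcand)
  have hqD : ∀ z ∈ q.support, z ∈ D := hqcand.1
  have htu₀ : G.Adj t u₀ := hqcand.2.1
  have hv₀M : ∃ m ∈ M, G.Adj v₀ m := hqcand.2.2
  -- no support vertex is in M
  have hsupM : ∀ z ∈ q.support, z ∉ M := by
    intro z hz hzM
    by_cases hzu : z = u₀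
    · exact hadjM u₀ htu₀ (hzu ▸ hzM)
    · have hu₀M : u₀ ∉ M := hadjM u₀ htu₀
      obtain ⟨v', q', hsub', hm', hlen'⟩ := prefix_to_target (q.takeUntil z hz) hu₀M hzM
      have : N ≤ q'.length := hmin _ _ q' ⟨fun z' hz' =>
        hqD z' (q.support_takeUntil_subset hz (hsub' z' hz')), htu₀, hm'⟩
      have h2 : (q.takeUntil z hz).length ≤ q.length := q.length_takeUntil_le hz
      omega
  -- t not in support
  have htsup : t ∉ q.support := by
    intro ht
    have htu : t ≠ u₀ := fun h => G.irrefl (h ▸ htu₀)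
    have hlt : 1 ≤ (q.takeUntil t ht).length := by
      rcases Nat.eq_zero_or_pos (q.takeUntil t ht).length with h0 | h1
      · exact absurd (Walk.eq_of_length_eq_zero h0).symm htu
      · exact h1
    have hspec := congrArg Walk.length (q.take_spec ht)
    rw [Walk.length_append] at hspec
    cases hdrop : q.dropUntil t ht with
    | nil =>
      obtain ⟨m, hm, hadj⟩ := hv₀M
      exact hadjM m hadj hm
    | cons r p =>
      have hsubp : ∀ z ∈ p.support, z ∈ D := by
        intro z hz
        refine hqD z (q.support_dropUntil_subset ht ?_)
        rw [hdrop, Walk.support_cons]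
        exact List.mem_cons_of_mem _ hz
      have : N ≤ p.length := hmin _ _ p ⟨hsubp, r, hv₀M⟩
      have hld : (q.dropUntil t ht).length = p.length + 1 := by
        rw [hdrop, Walk.length_cons]
      omega
  -- support avoids Qs
  have hsupQs : ∀ z ∈ q.support, z ∉ Qs := by
    intro z hz hzQ
    exact htsup ((hQD z hzQ (hqD z hz)) ▸ hz)
  -- uniqueness of the t-neighbour
  have huniq_t : ∀ x ∈ q.support, G.Adj t x → x = u₀ := by
    intro x hx htx
    by_contra hxu
    have hlt : 1 ≤ (q.takeUntil x hx).length := by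
      rcases Nat.eq_zero_or_pos (q.takeUntil x hx).length with h0 | h1
      · exact absurd (Walk.eq_of_length_eq_zero h0).symm hxu
      · exact h1
    have hspec := congrArg Walk.length (q.take_spec hx)
    rw [Walk.length_append] at hspec
    have hsubd : ∀ z ∈ (q.dropUntil x hx).support, z ∈ D := fun z hz =>
      hqD z (q.support_dropUntil_subset hx hz)
    have := hmin _ _ (q.dropUntil x hx) ⟨hsubd, htx, hv₀M⟩
    omega
  -- uniqueness of the M-neighbour
  have huniq_M : ∀ x ∈ q.support, (∃ m ∈ M, G.Adj x m) → x = v₀ := by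
    intro x hx hm
    by_contra hxv
    have hlt : 1 ≤ (q.dropUntil x hx).length := by
      rcases Nat.eq_zero_or_pos (q.dropUntil x hx).length with h0 | h1
      · exact absurd (Walk.eq_of_length_eq_zero h0) hxv
      · exact h1
    have hspec := congrArg Walk.length (q.take_spec hx)
    rw [Walk.length_append] at hspec
    have hsubT : ∀ z ∈ (q.takeUntil x hx).support, z ∈ D := fun z hz =>
      hqD z (q.support_takeUntil_subset hx hz)
    have := hmin _ _ (q.takeUntil x hx) ⟨hsubT, htu₀, hm⟩
    omega
  -- inducedness
  have key : ∀ (x : V) (hx : x ∈ q.support) (y : V),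
      y ∈ (q.dropUntil x hx).support → G.Adj x y → q.toSubgraph.Adj x y := by
    intro x hx y hyd hxy
    have hlen2 := congrArg Walk.length ((q.dropUntil x hx).take_spec hyd)
    rw [Walk.length_append] at hlen2
    have hlenq := congrArg Walk.length (q.take_spec hx)
    rw [Walk.length_append] at hlenq
    rcases Nat.lt_or_ge ((q.dropUntil x hx).takeUntil y hyd).length 2 with hsmall | hbig
    · have h1 : ((q.dropUntil x hx).takeUntil y hyd).length = 1 := by
        rcases Nat.eq_zero_or_pos ((q.dropUntil x hx).takeUntil y hyd).length with h0 | hp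
        · exact absurd (Walk.eq_of_length_eq_zero h0) hxy.ne
        · omega
      have hadj' := toSubgraph_adj_of_length_one _ h1
      have hq1 : (((q.takeUntil x hx).append
          (((q.dropUntil x hx).takeUntil y hyd).append
            ((q.dropUntil x hx).dropUntil y hyd)))).toSubgraph = q.toSubgraph := by
        rw [(q.dropUntil x hx).take_spec hyd, q.take_spec hx]
      rw [← hq1]
      rw [Walk.toSubgraph_append, Walk.toSubgraph_append]
      exact Subgraph.sup_adj.mpr (Or.inr (Subgraph.sup_adj.mpr (Or.inl hadj')))
    · exfalso
      have hsubw : ∀ z ∈ ((q.takeUntil x hx).append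
          (Walk.cons hxy ((q.dropUntil x hx).dropUntil y hyd))).support, z ∈ D := by
        intro z hz
        rw [Walk.mem_support_append_iff] at hz
        rcases hz with hz | hz
        · exact hqD z (q.support_takeUntil_subset hx hz)
        · rw [Walk.support_cons, List.mem_cons] at hz
          rcases hz with rfl | hz
          · exact hqD z hx
          · exact hqD z (q.support_dropUntil_subset hx
              ((q.dropUntil x hx).support_dropUntil_subset hyd hz))
      have := hmin _ _ _ ⟨hsubw, htu₀, hv₀M⟩
      rw [Walk.length_append, Walk.length_cons] at this
      omega
  refine ⟨u₀, v₀, q, hqpath, ?_, htu₀, huniq_t, hv₀M, huniq_M, ?_⟩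
  · intro x hx
    exact ⟨hqD x hx, hsupQs x hx, hsupM x hx, fun h => htsup (h ▸ hx)⟩
  · intro x hx y hy hxy
    rcases mem_dropUntil_or q hqpath hx hy with h | h
    · exact key x hx y h hxy
    · exact (key y hy x h hxy.symm).symm

end Route

section Step
variable {V : Type*} [Fintype V] {G : SimpleGraph V}

lemma ball_self {t : V} : t ∈ ballSet G t 8 := ⟨Walk.nil, by simp⟩

lemma ball_adj {t z : V} (h : G.Adj t z) : z ∈ ballSet G t 8 :=
  ⟨Walk.cons h Walk.nil, by simp⟩

lemma step_lemma {κ : ℕ} (hball : chiBall G 8 ≤ κ)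
    {a t : V} {p : G.Walk a t} {D : Set V} {x : ℕ} (hx : 1 ≤ x)
    (hip : IsInducedPath G p)
    (hconn : (G.induce D).Connected)
    (hsrc : ∃ y ∈ D, y ∉ p.support ∧ G.Adj t y)
    (hQD : ∀ w ∈ p.support, w ∈ D → w = t)
    (hI7 : ∀ w ∈ p.support, (∃ y ∈ D, y ∉ p.support ∧ G.Adj w y) → w = t)
    (hchi : x + κ ≤ chi (G.induce D)) :
    ∃ (b₀ t' : V) (p' : G.Walk a t') (M : Set V),
      IsInducedPath G p' ∧
      (∀ w ∈ p'.support, w ∈ p.support ∨ w ∈ D) ∧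
      (∀ w ∈ p.support, w ∈ p'.support) ∧
      M ⊆ D ∧
      (G.induce M).Connected ∧
      x ≤ chi (G.induce M) ∧
      (∀ w ∈ p'.support, w ∉ M) ∧
      (∃ y ∈ M, y ∉ p'.support ∧ G.Adj t' y) ∧
      (∀ w ∈ p'.support, (∃ y ∈ M, G.Adj w y) → w = t') ∧
      G.Adj t b₀ ∧ b₀ ∈ D ∧ b₀ ∈ p'.support ∧
      (∀ m ∈ M, distGE G b₀ m 8) := by
  classical
  -- delete the ball around t
  have hsplit : (D ∩ ballSet G t 8) ∪ (D \ ballSet G t 8) = D :=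
    Set.inter_union_diff D (ballSet G t 8)
  have hballchi : chi (G.induce (D ∩ ballSet G t 8)) ≤ κ :=
    chi_induce_le_of_subset_ball G hball Set.inter_subset_right
  have hchirest : x ≤ chi (G.induce (D \ ballSet G t 8)) := by
    have := chi_induce_union_le G (D ∩ ballSet G t 8) (D \ ballSet G t 8)
    rw [hsplit] at this
    omega
  obtain ⟨M, hMsub, hMne, hMconn, hMchi⟩ :=
    exists_connected_subset_chi_ge G (le_trans hx hchirest)
  have hMD : M ⊆ D := fun m hm => (hMsub hm).1
  have hMball : ∀ m ∈ M, m ∉ ballSet G t 8 := fun m hm => (hMsub hm).2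
  have hMp : ∀ m ∈ M, m ∉ p.support := by
    intro m hm hmp
    exact hMball m hm ((hQD m hmp (hMD hm)) ▸ ball_self)
  obtain ⟨b₀, t', q, hqpath, hqsup, htb₀, huniq_t, hm', huniq_M, hqind⟩ :=
    route (Qs := {w | w ∈ p.support}) hconn hMD hMne hMball
      (by obtain ⟨y, hy1, _, hy3⟩ := hsrc; exact ⟨y, hy1, hy3⟩)
      (fun w hw hwD => hQD w hw hwD)
  set p' : G.Walk a t' := p.append (Walk.cons htb₀ q) with hp'def
  have hmem : ∀ w, w ∈ p'.support ↔ (w ∈ p.support ∨ w ∈ q.support) := by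
    intro w
    rw [hp'def, Walk.mem_support_append_iff, Walk.support_cons, List.mem_cons]
    constructor
    · rintro (h | rfl | h)
      · exact Or.inl h
      · exact Or.inl (Walk.end_mem_support p)
      · exact Or.inr h
    · rintro (h | h)
      · exact Or.inl h
      · exact Or.inr (Or.inr h)
  have hqnotp : ∀ z ∈ q.support, z ∉ p.support := fun z hz => (hqsup z hz).2.1
  have hp'path : p'.IsPath := by
    rw [Walk.isPath_def, hp'def, Walk.support_append, Walk.support_cons, List.tail_cons,
      List.nodup_append]
    exact ⟨hip.1.support_nodup, hqpath.support_nodup, fun z hz w hw hzw => hqnotp w hw (hzw ▸ hz)⟩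
  -- the toSubgraph of p'
  have hsub1 : p.toSubgraph ≤ p'.toSubgraph := by
    rw [hp'def, Walk.toSubgraph_append]
    exact le_sup_left
  have hsub2 : q.toSubgraph ≤ p'.toSubgraph := by
    rw [hp'def, Walk.toSubgraph_append]
    refine le_trans ?_ le_sup_right
    simp only [Walk.toSubgraph]
    exact le_sup_right
  have hsub3 : p'.toSubgraph.Adj t b₀ := by
    rw [hp'def, Walk.toSubgraph_append]
    refine Subgraph.sup_adj.mpr (Or.inr ?_)
    simp only [Walk.toSubgraph]
    exact Subgraph.sup_adj.mpr (Or.inl (by simp))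
  -- membership in M excluded for p'
  have hp'M : ∀ w ∈ p'.support, w ∉ M := by
    intro w hw hwM
    rcases (hmem w).mp hw with h | h
    · exact hMp w hwM h
    · exact (hqsup w h).2.2.1 hwM
  have hip' : IsInducedPath G p' := by
    refine ⟨hp'path, ?_⟩
    intro z hz y hy hzy
    rcases (hmem z).mp hz with hzp | hzq <;> rcases (hmem y).mp hy with hyp | hyq
    · exact hsub1.2 (hip.2 z hzp y hyp hzy)
    · -- z on p, y on q
      have hzt : z = t := hI7 z hzp ⟨y, (hqsup y hyq).1, hqnotp y hyq, hzy⟩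
      subst hzt
      have : y = b₀ := huniq_t y hyq hzy
      subst this
      exact hsub3
    · have hyt : y = t := hI7 y hyp ⟨z, (hqsup z hzq).1, hqnotp z hzq, hzy.symm⟩
      subst hyt
      have : z = b₀ := huniq_t z hzq hzy.symm
      subst this
      exact hsub3.symm
    · exact hsub2.2 (hqind z hzq y hyq hzy)
  refine ⟨b₀, t', p', M, hip', ?_, ?_, hMD, hMconn, le_trans hchirest hMchi, hp'M, ?_, ?_,
    htb₀, (hqsup b₀ (Walk.start_mem_support q)).1, ?_, ?_⟩
  · intro w hw
    rcases (hmem w).mp hw with h | h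
    · exact Or.inl h
    · exact Or.inr (hqsup w h).1
  · intro w hw
    exact (hmem w).mpr (Or.inl hw)
  · obtain ⟨m, hmM, hmadj⟩ := hm'
    exact ⟨m, hmM, fun hc => hp'M m hc hmM, hmadj⟩
  · intro w hw hwadj
    rcases (hmem w).mp hw with h | h
    · exfalso
      obtain ⟨y, hyM, hyadj⟩ := hwadj
      have hyp : y ∉ p.support := fun hc => hMp y hyM hc
      have hwt : w = t := hI7 w h ⟨y, hMD hyM, hyp, hyadj⟩
      subst hwt
      exact hMball y hyM (ball_adj hyadj)
    · exact huniq_M w h hwadj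
  · exact (hmem b₀).mpr (Or.inr (Walk.start_mem_support q))
  · intro m hmM
    intro w
    by_contra hc
    push_neg at hc
    exact hMball m hmM ⟨Walk.cons htb₀ w, by rw [Walk.length_cons]; omega⟩
end Step

section Loop
variable {V : Type*} [Fintype V] {G : SimpleGraph V}

lemma loop_lemma {κ : ℕ} (hball : chiBall G 8 ≤ κ) :
    ∀ (k : ℕ) (x : ℕ), 1 ≤ x →
    ∀ (a t : V) (p : G.Walk a t) (D : Set V),
    IsInducedPath G p →
    (G.induce D).Connected →
    (∃ y ∈ D, y ∉ p.support ∧ G.Adj t y) →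
    (∀ w ∈ p.support, w ∈ D → w = t) →
    (∀ w ∈ p.support, (∃ y ∈ D, y ∉ p.support ∧ G.Adj w y) → w = t) →
    x + (k + 1) * κ ≤ chi (G.induce D) →
    ∃ (t' : V) (p' : G.Walk a t') (C' : Set V) (s : Fin (k+1) → V),
      IsInducedPath G p' ∧
      (∀ w ∈ p'.support, w ∈ p.support ∨ w ∈ D) ∧
      (∀ w ∈ p.support, w ∈ p'.support) ∧
      C' ⊆ D ∧ (G.induce C').Connected ∧ x ≤ chi (G.induce C') ∧
      (∃ y ∈ C', G.Adj t' y) ∧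
      (∀ w ∈ p'.support, (∃ y ∈ C', G.Adj w y) → w = t') ∧
      (∀ w ∈ p'.support, w ∉ C') ∧
      (∀ i, s i ∈ p'.support ∧ s i ∈ D) ∧
      (∀ i j, i ≠ j → distGE G (s i) (s j) 8) ∧
      (∀ i, ∀ w ∈ C', distGE G (s i) w 8) := by
  intro k
  induction k with
  | zero =>
    intro x hx a t p D hip hconn hsrc hQD hI7 hchi
    obtain ⟨b₀, t', p', M, hip', hsub', hsup', hMD, hMconn, hMchi, hp'M, hsrc', hI7',
        htb₀, hb₀D, hb₀p', hb₀dist⟩ :=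
      step_lemma hball hx hip hconn hsrc hQD hI7 (by simpa using hchi)
    refine ⟨t', p', M, fun _ => b₀, hip', hsub', hsup', hMD, hMconn, hMchi, ?_, hI7', hp'M,
      fun _ => ⟨hb₀p', hb₀D⟩, ?_, fun _ => hb₀dist⟩
    · obtain ⟨y, hyM, _, hyadj⟩ := hsrc'
      exact ⟨y, hyM, hyadj⟩
    · intro i j hne
      exact absurd (by omega : i = j) hne
  | succ n ih =>
    intro x hx a t p D hip hconn hsrc hQD hI7 hchi
    obtain ⟨b₀, t₁, p₁, M, hip₁, hsub₁, hsup₁, hMD, hMconn, hMchi, hp₁M, hsrc₁, hI7₁,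
        htb₀, hb₀D, hb₀p₁, hb₀dist⟩ :=
      step_lemma hball (x := x + (n+1) * κ) (by omega) hip hconn hsrc hQD hI7
        (by have : x + (n + 1 + 1) * κ = x + (n+1) * κ + κ := by ring
            omega)
    have hQD₁ : ∀ w ∈ p₁.support, w ∈ M → w = t₁ :=
      fun w hw hwM => absurd hwM (hp₁M w hw)
    have hI7₁' : ∀ w ∈ p₁.support, (∃ y ∈ M, y ∉ p₁.support ∧ G.Adj w y) → w = t₁ := by
      intro w hw ⟨y, hyM, _, hyadj⟩
      exact hI7₁ w hw ⟨y, hyM, hyadj⟩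
    obtain ⟨t', p', C', s', hip'', hsub'', hsup'', hC'M, hC'conn, hC'chi, hC'src, hC'uniq,
        hC'disj, hs'mem, hs'pair, hs'C⟩ :=
      ih x hx a t₁ p₁ M hip₁ hMconn hsrc₁ hQD₁ hI7₁' hMchi
    refine ⟨t', p', C', Fin.cases b₀ s', hip'', ?_, ?_, hC'M.trans hMD, hC'conn, hC'chi,
      hC'src, hC'uniq, hC'disj, ?_, ?_, ?_⟩
    · intro w hw
      rcases hsub'' w hw with h | h
      · rcases hsub₁ w h with h' | h'
        · exact Or.inl h'
        · exact Or.inr h'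
      · exact Or.inr (hMD h)
    · intro w hw
      exact hsup'' w (hsup₁ w hw)
    · intro i
      rcases Fin.eq_zero_or_eq_succ i with rfl | ⟨i', rfl⟩
      · simp only [Fin.cases_zero]
        exact ⟨hsup'' b₀ hb₀p₁, hb₀D⟩
      · simp only [Fin.cases_succ]
        exact ⟨(hs'mem i').1, hMD (hs'mem i').2⟩
    · intro i j hne
      rcases Fin.eq_zero_or_eq_succ i with rfl | ⟨i', rfl⟩ <;>
        rcases Fin.eq_zero_or_eq_succ j with rfl | ⟨j', rfl⟩
      · exact absurd rfl hne
      · simp only [Fin.cases_zero, Fin.cases_succ]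
        exact hb₀dist (s' j') (hs'mem j').2
      · simp only [Fin.cases_zero, Fin.cases_succ]
        exact distGE_symm (hb₀dist (s' i') (hs'mem i').2)
      · simp only [Fin.cases_succ]
        exact hs'pair i' j' (fun h => hne (by rw [h]))
    · intro i w hw
      rcases Fin.eq_zero_or_eq_succ i with rfl | ⟨i', rfl⟩
      · simp only [Fin.cases_zero]
        exact hb₀dist w (hC'M hw)
      · simp only [Fin.cases_succ]
        exact hs'C i' w hw

end Loop


/-- **Lemma 5.1.** If `χ^{(8)}(G) ≤ κ` and `χ(C) ≥ c + kκ`, then there is a lollipop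
`(P, C')` contained in `C` with `χ(C') ≥ c` and a `k`-stripe of `(P, C')`. -/
theorem lollipop_with_stripe (V : Type) [Fintype V] (c k κ : ℕ)
    (hc : 0 < c) (hk : 0 < k) (hκ : 0 < κ)
    (G : SimpleGraph V) (hball : chiBall G 8 ≤ κ)
    (C : Set V) (hC : c + k * κ ≤ chi (G.induce C)) :
    ∃ (a t : V) (p : G.Walk a t) (C' : Set V),
      (∀ w ∈ p.support, w ∈ C) ∧ C' ⊆ C ∧
      IsInducedPath G p ∧ (G.induce C').Connected ∧
      (∃ x ∈ C', G.Adj t x) ∧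
      (∀ w ∈ p.support, (∃ x ∈ C', G.Adj w x) → w = t) ∧
      c ≤ chi (G.induce C') ∧
      ∃ s : Fin k → V, Function.Injective s ∧
        (∀ i, s i ∈ p.support) ∧
        (∀ i j, i ≠ j → distGE G (s i) (s j) 8) ∧
        (∀ i, ∀ w ∈ C', distGE G (s i) w 8) := by
  classical
  obtain ⟨k', rfl⟩ : ∃ k', k = k' + 1 := ⟨k - 1, by omega⟩
  have hkκ : κ ≤ (k' + 1) * κ := Nat.le_mul_of_pos_left κ (by omega)
  have h2 : 2 ≤ chi (G.induce C) := by omega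
  obtain ⟨C₀, hC₀sub, hC₀ne, hC₀conn, hC₀chi⟩ :=
    exists_connected_subset_chi_ge G (S := C) (by omega)
  have hchi₀ : c + (k' + 1) * κ ≤ chi (G.induce C₀) := le_trans hC hC₀chi
  obtain ⟨a, haC₀, y, hyC₀, hay⟩ := exists_adj_of_two_le_chi G (le_trans h2 hC₀chi)
  have hip₀ : IsInducedPath G (Walk.nil : G.Walk a a) := by
    refine ⟨Walk.IsPath.nil, ?_⟩
    intro z hz w hw hzw
    rw [Walk.support_nil, List.mem_singleton] at hz hw
    subst hz; subst hw
    exact absurd hzw (G.irrefl)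
  have hsrc₀ : ∃ z ∈ C₀, z ∉ (Walk.nil : G.Walk a a).support ∧ G.Adj a z := by
    refine ⟨y, hyC₀, ?_, hay⟩
    rw [Walk.support_nil, List.mem_singleton]
    exact fun h => G.irrefl (h ▸ hay)
  have hQD₀ : ∀ w ∈ (Walk.nil : G.Walk a a).support, w ∈ C₀ → w = a := by
    intro w hw _
    rwa [Walk.support_nil, List.mem_singleton] at hw
  have hI7₀ : ∀ w ∈ (Walk.nil : G.Walk a a).support,
      (∃ z ∈ C₀, z ∉ (Walk.nil : G.Walk a a).support ∧ G.Adj w z) → w = a := by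
    intro w hw _
    rwa [Walk.support_nil, List.mem_singleton] at hw
  obtain ⟨t', p', C', s, hip', hsub', hsup', hC'sub, hC'conn, hC'chi, hC'src, hC'uniq,
      hC'disj, hsmem, hspair, hsC⟩ :=
    loop_lemma hball k' c hc a a Walk.nil C₀ hip₀ hC₀conn hsrc₀ hQD₀ hI7₀ hchi₀
  refine ⟨a, t', p', C', ?_, hC'sub.trans hC₀sub, hip', hC'conn, hC'src, hC'uniq, hC'chi,
    s, ?_, fun i => (hsmem i).1, hspair, hsC⟩
  · intro w hw
    rcases hsub' w hw with h | h
    · rw [Walk.support_nil, List.mem_singleton] at h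
      exact h ▸ hC₀sub haC₀
    · exact hC₀sub h
  · intro i j h
    by_contra hne
    exact distGE_ne (hspair i j hne) h
end
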